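/- Let l₁ > 0, l₂ > 0 and x₀ > 0 be real numbers and let z be a complex number with Re(z) ≥ x₀. Then |sinh(l₁z)·cosh(l₂z)/(sinh(l₂z)·cosh(l₁z)) − 1| ≤ coth(l₁x₀)·coth(l₂x₀) − 1. -/

import Mathlib

open Complex Real

lemma sq_abs_sinh' (x y : ℝ) :
    (‖Complex.sinh (x + y * Complex.I)‖)^2 = Real.sinh x ^ 2 + Real.sin y ^ 2 := by
  rw [Complex.sinh_add, Complex.sinh_mul_I, Complex.cosh_mul_I, ← Complex.ofReal_sinh,
    ← Complex.ofReal_cosh, ← Complex.ofReal_cos, ← Complex.ofReal_sin, Complex.sq_norm]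
  simp only [Complex.normSq_apply, Complex.add_re, Complex.add_im, Complex.mul_re,
    Complex.mul_im, Complex.ofReal_re, Complex.ofReal_im, Complex.I_re, Complex.I_im]
  nlinarith [Real.sin_sq_add_cos_sq y, Real.cosh_sq x]

lemma sq_abs_cosh' (x y : ℝ) :
    (‖Complex.cosh (x + y * Complex.I)‖)^2 = Real.sinh x ^ 2 + Real.cos y ^ 2 := by
  rw [Complex.cosh_add, Complex.sinh_mul_I, Complex.cosh_mul_I, ← Complex.ofReal_sinh,
    ← Complex.ofReal_cosh, ← Complex.ofReal_cos, ← Complex.ofReal_sin, Complex.sq_norm]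
  simp only [Complex.normSq_apply, Complex.add_re, Complex.add_im, Complex.mul_re,
    Complex.mul_im, Complex.ofReal_re, Complex.ofReal_im, Complex.I_re, Complex.I_im]
  nlinarith [Real.sin_sq_add_cos_sq y, Real.cosh_sq x]

lemma sq_abs_sinh (w : ℂ) :
    (‖Complex.sinh w‖)^2 = Real.sinh w.re ^ 2 + Real.sin w.im ^ 2 := by
  have := sq_abs_sinh' w.re w.im; rwa [Complex.re_add_im] at this

lemma sq_abs_cosh (w : ℂ) :
    (‖Complex.cosh w‖)^2 = Real.sinh w.re ^ 2 + Real.cos w.im ^ 2 := by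
  have := sq_abs_cosh' w.re w.im; rwa [Complex.re_add_im] at this

lemma sinh_re_le_abs_sinh (w : ℂ) : Real.sinh w.re ≤ ‖Complex.sinh w‖ := by
  rcases le_or_gt (Real.sinh w.re) 0 with h | h
  · exact h.trans (norm_nonneg _)
  · refine le_of_pow_le_pow_left₀ two_ne_zero (norm_nonneg _) ?_
    rw [sq_abs_sinh]; nlinarith [sq_nonneg (Real.sin w.im)]

lemma sinh_re_le_abs_cosh (w : ℂ) : Real.sinh w.re ≤ ‖Complex.cosh w‖ := by
  rcases le_or_gt (Real.sinh w.re) 0 with h | h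
  · exact h.trans (norm_nonneg _)
  · refine le_of_pow_le_pow_left₀ two_ne_zero (norm_nonneg _) ?_
    rw [sq_abs_cosh]; nlinarith [sq_nonneg (Real.cos w.im)]

lemma abs_sinh_le_cosh_re (w : ℂ) : ‖Complex.sinh w‖ ≤ Real.cosh w.re := by
  refine le_of_pow_le_pow_left₀ two_ne_zero (Real.cosh_pos _).le ?_
  rw [sq_abs_sinh, Real.cosh_sq]
  nlinarith [Real.sin_sq_add_cos_sq w.im, sq_nonneg (Real.cos w.im)]

lemma coth_anti {a b : ℝ} (hb : 0 < b) (hab : b ≤ a) :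
    Real.cosh a / Real.sinh a ≤ Real.cosh b / Real.sinh b := by
  have ha : 0 < Real.sinh a := Real.sinh_pos_iff.2 (hb.trans_le hab)
  have hbs : 0 < Real.sinh b := Real.sinh_pos_iff.2 hb
  rw [div_le_div_iff₀ ha hbs]
  have := Real.sinh_nonneg_iff.2 (sub_nonneg.2 hab)
  rw [Real.sinh_sub] at this
  nlinarith

/-- For `l₁, l₂, x₀ > 0` and `Re(z) ≥ x₀`,
`|sinh(l₁z)cosh(l₂z)/(sinh(l₂z)cosh(l₁z)) − 1| ≤ coth(l₁x₀)coth(l₂x₀) − 1`. -/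
theorem stmt15 (l₁ l₂ x₀ : ℝ) (h1 : 0 < l₁) (h2 : 0 < l₂) (h0 : 0 < x₀)
    (z : ℂ) (hz : x₀ ≤ z.re) :
    ‖Complex.sinh ((l₁ : ℂ) * z) * Complex.cosh ((l₂ : ℂ) * z) /
        (Complex.sinh ((l₂ : ℂ) * z) * Complex.cosh ((l₁ : ℂ) * z)) - 1‖ ≤
      (Real.cosh (l₁ * x₀) / Real.sinh (l₁ * x₀)) *
        (Real.cosh (l₂ * x₀) / Real.sinh (l₂ * x₀)) - 1 := by
  set t := z.re with ht
  have ht0 : 0 < t := h0.trans_le hz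
  have hre1 : ((l₁ : ℂ) * z).re = l₁ * t := by simp [Complex.re_ofReal_mul, ht]
  have hre2 : ((l₂ : ℂ) * z).re = l₂ * t := by simp [Complex.re_ofReal_mul, ht]
  have hs1t : 0 < Real.sinh (l₁ * t) := Real.sinh_pos_iff.2 (by positivity)
  have hs2t : 0 < Real.sinh (l₂ * t) := Real.sinh_pos_iff.2 (by positivity)
  -- denominator bounds
  have hd1 : Real.sinh (l₂ * t) ≤ ‖Complex.sinh ((l₂ : ℂ) * z)‖ := by
    have := sinh_re_le_abs_sinh ((l₂ : ℂ) * z); rwa [hre2] at this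
  have hd2 : Real.sinh (l₁ * t) ≤ ‖Complex.cosh ((l₁ : ℂ) * z)‖ := by
    have := sinh_re_le_abs_cosh ((l₁ : ℂ) * z); rwa [hre1] at this
  have hsz : Complex.sinh ((l₂ : ℂ) * z) ≠ 0 := by
    intro h
    rw [h] at hd1; simp at hd1; nlinarith [mul_pos h2 ht0]
  have hcz : Complex.cosh ((l₁ : ℂ) * z) ≠ 0 := by
    intro h
    rw [h] at hd2; simp at hd2; nlinarith [mul_pos h1 ht0]
  have hden : Complex.sinh ((l₂ : ℂ) * z) * Complex.cosh ((l₁ : ℂ) * z) ≠ 0 :=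
    mul_ne_zero hsz hcz
  -- rewrite expression
  have key : Complex.sinh ((l₁ : ℂ) * z) * Complex.cosh ((l₂ : ℂ) * z) /
      (Complex.sinh ((l₂ : ℂ) * z) * Complex.cosh ((l₁ : ℂ) * z)) - 1 =
      Complex.sinh (((l₁ : ℂ) - l₂) * z) /
        (Complex.sinh ((l₂ : ℂ) * z) * Complex.cosh ((l₁ : ℂ) * z)) := by
    rw [sub_mul, Complex.sinh_sub, div_sub_one hden]
    congr 1
    ring
  rw [key, norm_div, norm_mul]
  -- numerator bound
  have hnum : ‖Complex.sinh (((l₁ : ℂ) - l₂) * z)‖ ≤ Real.cosh ((l₁ - l₂) * t) := by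
    have := abs_sinh_le_cosh_re (((l₁ : ℂ) - l₂) * z)
    have hre : (((l₁ : ℂ) - l₂) * z).re = (l₁ - l₂) * t := by
      have : ((l₁ : ℂ) - l₂) = ((l₁ - l₂ : ℝ) : ℂ) := by push_cast; ring
      rw [this, Complex.re_ofReal_mul, ht]
    rwa [hre] at this
  have hdenpos : 0 < ‖Complex.sinh ((l₂ : ℂ) * z)‖ * ‖Complex.cosh ((l₁ : ℂ) * z)‖ :=
    mul_pos (hs2t.trans_le hd1) (hs1t.trans_le hd2)
  have step1 : ‖Complex.sinh (((l₁ : ℂ) - l₂) * z)‖ /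
      (‖Complex.sinh ((l₂ : ℂ) * z)‖ * ‖Complex.cosh ((l₁ : ℂ) * z)‖) ≤
      Real.cosh ((l₁ - l₂) * t) / (Real.sinh (l₂ * t) * Real.sinh (l₁ * t)) := by
    apply div_le_div₀ ((Real.cosh_pos _).le) hnum (by positivity)
    exact mul_le_mul hd1 hd2 hs1t.le (norm_nonneg _)
  refine step1.trans ?_
  -- real inequality
  have expand : Real.cosh ((l₁ - l₂) * t) / (Real.sinh (l₂ * t) * Real.sinh (l₁ * t)) =
      (Real.cosh (l₁ * t) / Real.sinh (l₁ * t)) * (Real.cosh (l₂ * t) / Real.sinh (l₂ * t)) - 1 := by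
    have e : (l₁ - l₂) * t = l₁ * t - l₂ * t := by ring
    rw [e, Real.cosh_sub, eq_sub_iff_add_eq]
    field_simp
    ring
  rw [expand]
  have c1 : Real.cosh (l₁ * t) / Real.sinh (l₁ * t) ≤ Real.cosh (l₁ * x₀) / Real.sinh (l₁ * x₀) :=
    coth_anti (by positivity) (by nlinarith)
  have c2 : Real.cosh (l₂ * t) / Real.sinh (l₂ * t) ≤ Real.cosh (l₂ * x₀) / Real.sinh (l₂ * x₀) :=
    coth_anti (by positivity) (by nlinarith)
  have p1 : 0 ≤ Real.cosh (l₂ * t) / Real.sinh (l₂ * t) := by positivity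
  have p2 : 0 ≤ Real.cosh (l₁ * x₀) / Real.sinh (l₁ * x₀) := by
    have := Real.sinh_pos_iff.2 (show (0:ℝ) < l₁ * x₀ by positivity); positivity
  have := mul_le_mul c1 c2 p1 p2
  linarith
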